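/- Semantic equivalence for elimination of redundant hypotheses: let R = (H ∧ H' ⇒ C) be a Horn clause such that there is a substitution σ with σH ⊆ H' (multiset inclusion) and σ fixes every variable occurring in H' or C. Then R and R' = (H' ⇒ C) derive exactly the same closed facts: for any set of clauses S and closed fact F, F is derivable from S ∪ {R} iff F is derivable from S ∪ {R'}. -/

import Mathlib

/-- First-order terms over function symbols `F`, with natural-number variables. -/
inductive Trm (F : Type) : Type
  | var : Nat → Trm F
  | app : F → List (Trm F) → Trm F

namespace Trm

variable {F : Type}

/-- Homomorphic extension of a substitution to terms. -/
def subst (σ : Nat → Trm F) : Trm F → Trm F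
  | var x => σ x
  | app f ts => app f (ts.attach.map (fun t => subst σ t.1))
decreasing_by
  simp_wf
  have := List.sizeOf_lt_of_mem t.2
  omega

/-- `VarOcc x t` : variable `x` occurs in term `t`. -/
inductive VarOcc (x : Nat) : Trm F → Prop
  | var : VarOcc x (var x)
  | app {f : F} {ts : List (Trm F)} {t : Trm F} : t ∈ ts → VarOcc x t → VarOcc x (app f ts)

end Trm

/-- A term is closed when no variable occurs in it. -/
def ClosedT {F : Type} (t : Trm F) : Prop := ∀ x, ¬ Trm.VarOcc x t

/-- A fact is an atom `P(t1,...,tn)`. -/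
structure Fct (P F : Type) where
  pred : P
  args : List (Trm F)

def Fct.subst {P F : Type} (σ : Nat → Trm F) (a : Fct P F) : Fct P F :=
  ⟨a.pred, a.args.map (Trm.subst σ)⟩

def Fct.Closed {P F : Type} (a : Fct P F) : Prop := ∀ t ∈ a.args, ClosedT t

def Fct.VarOcc {P F : Type} (x : Nat) (a : Fct P F) : Prop := ∃ t ∈ a.args, Trm.VarOcc x t

/-- A Horn clause: a finite multiset of hypotheses and a conclusion. -/
structure Clause (P F : Type) where
  hyp : Multiset (Fct P F)
  concl : Fct P F

/-- `(H1 ⇒ C1)` subsumes `(H2 ⇒ C2)` iff some substitution σ has `σ C1 = C2` and `σ H1 ⊆ H2`. -/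
def Subsumes {P F : Type} (c1 c2 : Clause P F) : Prop :=
  ∃ σ : Nat → Trm F, Fct.subst σ c1.concl = c2.concl ∧ c1.hyp.map (Fct.subst σ) ≤ c2.hyp

/-- Derivability of a closed fact via a finite derivation tree: each node is labeled by a
clause of `R` that subsumes the local inference `{labels of outgoing edges} ⇒ label of
incoming edge`. -/
inductive DTree {P F : Type} (R : Set (Clause P F)) : Fct P F → Prop
  | node (cl : Clause P F) (hs : Multiset (Fct P F)) (C : Fct P F) :
      cl ∈ R → Subsumes cl ⟨hs, C⟩ → (∀ f ∈ hs, DTree R f) → DTree R C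


theorem Trm.my_ind {F : Type} {motive : Trm F → Prop} (hvar : ∀ x, motive (.var x))
    (happ : ∀ f ts, (∀ t ∈ ts, motive t) → motive (.app f ts)) : ∀ t, motive t := by
  intro t
  induction t using Trm.subst.induct with
  | case1 x => exact hvar x
  | case2 f ts ih => exact happ f ts (fun t ht => ih ⟨t, ht⟩)

theorem Trm.subst_app {F : Type} (σ : Nat → Trm F) (f : F) (ts : List (Trm F)) :
    Trm.subst σ (.app f ts) = .app f (ts.map (Trm.subst σ)) := by
  rw [Trm.subst]
  congr 1
  simp

theorem Trm.subst_subst {F : Type} (σ τ : Nat → Trm F) (t : Trm F) :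
    Trm.subst τ (Trm.subst σ t) = Trm.subst (fun x => Trm.subst τ (σ x)) t := by
  induction t using Trm.my_ind with
  | hvar x => simp [Trm.subst]
  | happ f ts ih =>
    simp only [Trm.subst_app, List.map_map]
    congr 1
    exact List.map_congr_left fun t ht => ih t ht

theorem Trm.subst_fix {F : Type} (σ : Nat → Trm F) (t : Trm F)
    (h : ∀ x, Trm.VarOcc x t → σ x = .var x) : Trm.subst σ t = t := by
  induction t using Trm.my_ind with
  | hvar x => simpa [Trm.subst] using h x .var
  | happ f ts ih =>
    rw [Trm.subst_app]
    congr 1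
    have : ts.map (Trm.subst σ) = ts.map id :=
      List.map_congr_left fun t ht => ih t ht fun x hx => h x (.app ht hx)
    simpa using this

theorem Fct.subst_subst {P F : Type} (σ τ : Nat → Trm F) (a : Fct P F) :
    Fct.subst τ (Fct.subst σ a) = Fct.subst (fun x => Trm.subst τ (σ x)) a := by
  simp [Fct.subst, List.map_map]
  exact fun t _ => Trm.subst_subst σ τ t

theorem Fct.subst_fix {P F : Type} (σ : Nat → Trm F) (a : Fct P F)
    (h : ∀ x, Fct.VarOcc x a → σ x = .var x) : Fct.subst σ a = a := by
  obtain ⟨p, ts⟩ := a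
  simp only [Fct.subst, Fct.mk.injEq, true_and]
  have : ts.map (Trm.subst σ) = ts.map id :=
    List.map_congr_left fun t ht => Trm.subst_fix σ t fun x hx => h x ⟨t, ht, hx⟩
  simpa using this

/-- Elimination of redundant hypotheses: if `R = (H ∧ H' ⇒ C)` with a substitution `σ` such
that `σH ⊆ H'` (multisets) and `σ` fixes every variable occurring in `H'` or `C`, then
`R` and `R' = (H' ⇒ C)` derive exactly the same closed facts relative to any clause set. -/
theorem elim_redundant_hyp {P F : Type}
    (H H' : Multiset (Fct P F)) (C : Fct P F) (σ : Nat → Trm F)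
    (hsub : H.map (Fct.subst σ) ≤ H')
    (hfix : ∀ x : Nat, ((∃ f ∈ H', Fct.VarOcc x f) ∨ Fct.VarOcc x C) → σ x = Trm.var x)
    (S : Set (Clause P F)) (G : Fct P F) (hG : G.Closed) :
    DTree (insert ⟨H + H', C⟩ S) G ↔ DTree (insert ⟨H', C⟩ S) G := by
  clear hG
  constructor
  · intro hd
    induction hd with
    | node cl hs C0 hmem hsubs hch ih =>
      rcases hmem with hmem | hmem
      · subst hmem
        obtain ⟨τ, hτC, hτH⟩ := hsubs
        refine DTree.node ⟨H', C⟩ hs C0 (Set.mem_insert _ _) ⟨τ, hτC, ?_⟩ ih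
        calc H'.map (Fct.subst τ) ≤ (H + H').map (Fct.subst τ) :=
              Multiset.map_le_map (Multiset.le_add_left _ _)
          _ ≤ hs := hτH
      · exact DTree.node cl hs C0 (Set.mem_insert_of_mem _ hmem) hsubs ih
  · intro hd
    induction hd with
    | node cl hs C0 hmem hsubs hch ih =>
      rcases hmem with hmem | hmem
      · subst hmem
        obtain ⟨τ, hτC, hτH⟩ := hsubs
        set ρ : Nat → Trm F := fun x => Trm.subst τ (σ x) with hρ
        have key : ∀ a ∈ H + H', Fct.subst ρ a ∈ hs := by
          intro a ha
          rw [Multiset.mem_add] at ha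
          have hmem' : Fct.subst ρ a ∈ H'.map (Fct.subst τ) := by
            rw [hρ, ← Fct.subst_subst]
            rcases ha with ha | ha
            · have h1 : Fct.subst σ a ∈ H' :=
                Multiset.mem_of_le hsub (Multiset.mem_map_of_mem _ ha)
              exact Multiset.mem_map_of_mem _ h1
            · have h1 : Fct.subst σ a = a :=
                Fct.subst_fix σ a fun x hx => hfix x (Or.inl ⟨a, ha, hx⟩)
              rw [h1]
              exact Multiset.mem_map_of_mem _ ha
          exact Multiset.mem_of_le hτH hmem'
        refine DTree.node ⟨H + H', C⟩ ((H + H').map (Fct.subst ρ)) C0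
          (Set.mem_insert _ _) ⟨ρ, ?_, le_refl _⟩ ?_
        · show Fct.subst ρ C = C0
          rw [hρ, ← Fct.subst_subst,
            Fct.subst_fix σ C fun x hx => hfix x (Or.inr hx)]
          exact hτC
        · intro f hf
          rw [Multiset.mem_map] at hf
          obtain ⟨a, ha, rfl⟩ := hf
          exact ih _ (key a ha)
      · exact DTree.node cl hs C0 (Set.mem_insert_of_mem _ hmem) hsubs ih
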